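/- arXiv:2204.08275 — 4 statements merged into one kernel-verified Lean document; each statement's English description precedes it below -/
import Mathlib

section
/- ∑_{k=0}^∞ (10k − 1)/C(4k,2k) = 4√3·π/27. -/
open MeasureTheory intervalIntegral Real

open MeasureTheory intervalIntegral Real

/-- Beta integral for natural exponents. -/
lemma my_beta (b a : ℕ) : ∫ x in (0:ℝ)..1, x ^ a * (1 - x) ^ b
    = (a.factorial * b.factorial : ℝ) / (a + b + 1).factorial := by
  induction b generalizing a with
  | zero =>
    simp only [pow_zero, mul_one, integral_pow, one_pow, zero_pow, Nat.factorial_zero,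
      Nat.add_zero, Nat.cast_one]
    rw [Nat.factorial_succ]
    have ha : (a.factorial : ℝ) ≠ 0 := by positivity
    push_cast
    rw [zero_pow (Nat.succ_ne_zero a)]
    field_simp
    norm_num
  | succ b ih =>
    have key : ∫ x in (0:ℝ)..1, x ^ a * (1 - x) ^ (b + 1)
        = ((b:ℝ)+1)/((a:ℝ)+1) * ∫ x in (0:ℝ)..1, x ^ (a+1) * (1 - x) ^ b := by
      have hd : ∀ x ∈ Set.uIcc (0:ℝ) 1, HasDerivAt
          (fun x : ℝ => x ^ (a+1) * (1 - x) ^ (b+1) / ((a:ℝ)+1))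
          (x ^ a * (1 - x) ^ (b+1) - ((b:ℝ)+1)/((a:ℝ)+1) * (x ^ (a+1) * (1 - x) ^ b)) x := by
        intro x _
        have h1 : HasDerivAt (fun x : ℝ => x ^ (a+1)) (((a:ℝ)+1) * x ^ a) x := by
          simpa using hasDerivAt_pow (a+1) x
        have h2 : HasDerivAt (fun x : ℝ => (1 - x) ^ (b+1)) (-(((b:ℝ)+1) * (1-x) ^ b)) x := by
          have := (hasDerivAt_pow (b+1) (1 - x)).comp x ((hasDerivAt_const x (1:ℝ)).sub (hasDerivAt_id x))
          simpa [Function.comp_def] using this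
        have := (h1.mul h2).div_const ((a:ℝ)+1)
        refine this.congr_deriv ?_
        have ha : ((a:ℝ)+1) ≠ 0 := by positivity
        field_simp
        ring
      have hint1 : IntervalIntegrable (fun x : ℝ => x ^ a * (1 - x) ^ (b+1)) volume 0 1 :=
        (Continuous.intervalIntegrable (by continuity) _ _)
      have hint2 : IntervalIntegrable (fun x : ℝ => x ^ (a+1) * (1 - x) ^ b) volume 0 1 :=
        (Continuous.intervalIntegrable (by continuity) _ _)
      have := integral_eq_sub_of_hasDerivAt hd
        ((hint1.sub (hint2.const_mul _)) )
      simp only [one_pow, zero_pow, Nat.succ_ne_zero, mul_zero, zero_mul] at this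
      rw [intervalIntegral.integral_sub hint1 (hint2.const_mul _)] at this
      rw [intervalIntegral.integral_const_mul] at this
      have h10 : (1:ℝ) - 1 = 0 := by ring
      rw [h10] at this
      simp at this
      linarith
    rw [key, ih (a+1)]
    have h1 : ((a:ℝ)+1) ≠ 0 := by positivity
    have h2 : ((a + (b+1) + 1).factorial : ℝ) ≠ 0 := by positivity
    have h3 : ((a + 1 + b + 1).factorial : ℝ) = ((a + (b+1) + 1).factorial : ℝ) := by
      norm_num; ring_nf
    rw [h3]
    have hfa : ((a+1).factorial : ℝ) = ((a:ℝ)+1) * a.factorial := by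
      rw [Nat.factorial_succ]; push_cast; ring
    have hfb : ((b+1).factorial : ℝ) = ((b:ℝ)+1) * b.factorial := by
      rw [Nat.factorial_succ]; push_cast; ring
    rw [hfa, hfb]
    field_simp

lemma term_eq (k : ℕ) :
    (10 * (k : ℝ) - 1) / (Nat.choose (4 * k) (2 * k) : ℝ)
      = ∫ x in (0:ℝ)..1, (40 * (k:ℝ)^2 + 6 * k - 1) * (x^2 * (1-x)^2) ^ k := by
  have hbeta := my_beta (2*k) (2*k)
  have hx : ∀ x : ℝ, (x^2 * (1-x)^2) ^ k = x ^ (2*k) * (1-x) ^ (2*k) := by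
    intro x; rw [mul_pow, ← pow_mul, ← pow_mul]
  simp_rw [hx]
  rw [intervalIntegral.integral_const_mul, hbeta]
  have hch : (Nat.choose (4*k) (2*k) : ℝ) * ((2*k).factorial * (2*k).factorial) = ((4*k).factorial : ℝ) := by
    have := Nat.choose_mul_factorial_mul_factorial (show 2*k ≤ 4*k by omega)
    have h2 : 4*k - 2*k = 2*k := by omega
    rw [h2] at this
    push_cast [← this]
    ring
  have hfact : ((2*k + 2*k + 1).factorial : ℝ) = (4*k+1) * ((4*k).factorial) := by
    have h : 2*k + 2*k + 1 = (4*k) + 1 := by omega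
    rw [h, Nat.factorial_succ]
    push_cast; ring
  have hch0 : (Nat.choose (4*k) (2*k) : ℝ) ≠ 0 :=
    Nat.cast_ne_zero.mpr (Nat.choose_pos (by omega)).ne'
  have hf0 : ((2*k).factorial : ℝ) ≠ 0 := by positivity
  have hf40 : ((4*k).factorial : ℝ) ≠ 0 := by positivity
  have h4k1 : ((4:ℝ)*k+1) ≠ 0 := by positivity
  rw [hfact]
  field_simp
  linear_combination (-(40*(k:ℝ)^2) - 6*(k:ℝ) + 1) * hch

lemma series_pt {r : ℝ} (hr : ‖r‖ < 1) :
    HasSum (fun k : ℕ => (40*(k:ℝ)^2 + 6*k - 1) * r^k)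
      (80/(1-r)^3 - 114/(1-r)^2 + 33/(1-r)) := by
  have h2 := hasSum_choose_mul_geometric_of_norm_lt_one (𝕜 := ℝ) 2 hr
  have h1 := hasSum_choose_mul_geometric_of_norm_lt_one (𝕜 := ℝ) 1 hr
  have h0 := hasSum_choose_mul_geometric_of_norm_lt_one (𝕜 := ℝ) 0 hr
  have H := ((h2.mul_left 80).sub (h1.mul_left 114)).add (h0.mul_left 33)
  have key : ∀ n : ℕ, (80 * (((n+2).choose 2 : ℕ) * r^n) - 114 * (((n+1).choose 1 : ℕ) * r^n))
      + 33 * (((n+0).choose 0 : ℕ) * r^n) = (40*(n:ℝ)^2 + 6*n - 1) * r^n := by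
    intro n
    have hc2 : (((n+2).choose 2 : ℕ) : ℝ) = ((n:ℝ)+2)*((n:ℝ)+1)/2 := by
      have : 2 * ((n+2).choose 2) = (n+2)*(n+1) := by
        have h : n + 2 - 1 = n + 1 := by omega
        have hdvd : 2 ∣ (n+2)*(n+2-1) := by
          rw [h, Nat.mul_comm]
          exact (Nat.even_mul_succ_self (n+1)).two_dvd
        rw [Nat.choose_two_right, Nat.mul_div_cancel' hdvd, h]
      have := congrArg (fun m : ℕ => (m : ℝ)) this
      push_cast at this
      linarith
    rw [hc2, Nat.choose_one_right, Nat.choose_zero_right]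
    push_cast
    ring
  have Hfin : HasSum (fun k : ℕ => (40*(k:ℝ)^2 + 6*k - 1) * r^k)
      (80 * (1 / (1-r)^(2+1)) - 114 * (1 / (1-r)^(1+1)) + 33 * (1 / (1-r)^(0+1))) := by
    refine HasSum.congr_fun ?_ (fun n => (key n).symm)
    exact H
  convert Hfin using 1
  ring

noncomputable def myF (x : ℝ) : ℝ :=
  (-16/3 + 28/3*x + 4*x^2 - 8/3*x^3)/(1 - x^2*(1-x)^2)^2
  + (16/3 - 11*x + x^2 - 2/3*x^3)/(1 - x^2*(1-x)^2)
  + (4*Real.sqrt 3/9)*Real.arctan ((2*x-1)/Real.sqrt 3)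

noncomputable def myG (x : ℝ) : ℝ :=
  80/(1 - x^2*(1-x)^2)^3 - 114/(1 - x^2*(1-x)^2)^2 + 33/(1 - x^2*(1-x)^2)

lemma d_pos {x : ℝ} (h0 : 0 ≤ x) (h1 : x ≤ 1) : (15:ℝ)/16 ≤ 1 - x^2*(1-x)^2 := by
  have ht0 : 0 ≤ x*(1-x) := mul_nonneg h0 (by linarith)
  have ht1 : x*(1-x) ≤ 1/4 := by nlinarith [sq_nonneg (x - 1/2)]
  nlinarith [sq_nonneg (x*(1-x))]

lemma arc_deriv (x : ℝ) :
    HasDerivAt (fun x : ℝ => (4*Real.sqrt 3/9)*Real.arctan ((2*x-1)/Real.sqrt 3))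
      ((2/3)/(x^2 - x + 1)) x := by
  have hs0 : Real.sqrt 3 ≠ 0 := by positivity
  have hs2 : Real.sqrt 3 ^ 2 = 3 := Real.sq_sqrt (by norm_num)
  have hlin : HasDerivAt (fun x : ℝ => (2*x-1)/Real.sqrt 3) (2/Real.sqrt 3) x := by
    have h : HasDerivAt (fun x : ℝ => 2*x-1) 2 x := by
      simpa using ((hasDerivAt_id x).const_mul 2).sub_const 1
    exact h.div_const _
  have harc := (Real.hasDerivAt_arctan ((2*x-1)/Real.sqrt 3)).comp x hlin
  have hfull := harc.const_mul (4*Real.sqrt 3/9)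
  refine hfull.congr_deriv ?_
  have hp : x^2 - x + 1 > 0 := by nlinarith [sq_nonneg (x - 1/2)]
  have h1 : 1 + ((2*x-1)/Real.sqrt 3)^2 = (4*(x^2-x+1))/3 := by
    rw [div_pow]
    rw [hs2]
    ring
  rw [h1]
  have hpne : x^2 - x + 1 ≠ 0 := ne_of_gt hp
  field_simp
  ring_nf

lemma F_deriv {x : ℝ} (h0 : 0 ≤ x) (h1 : x ≤ 1) : HasDerivAt myF (myG x) x := by
  have hd : (15:ℝ)/16 ≤ 1 - x^2*(1-x)^2 := d_pos h0 h1
  have hdne : (1 - x^2*(1-x)^2) ≠ 0 := by linarith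
  -- derivative of the denominator
  have hq2 : HasDerivAt (fun x : ℝ => (1-x)^2) (-(2*(1-x))) x := by
    have := (hasDerivAt_pow 2 (1-x)).comp x ((hasDerivAt_const x (1:ℝ)).sub (hasDerivAt_id x))
    simpa [Function.comp_def] using this
  have hx2 : HasDerivAt (fun x : ℝ => x^2) (2*x) x := by simpa using hasDerivAt_pow 2 x
  have hden : HasDerivAt (fun x : ℝ => 1 - x^2*(1-x)^2)
      (-(2*x*(1-x)^2 - x^2*(2*(1-x)))) x := by
    have := (hasDerivAt_const x (1:ℝ)).sub (hx2.mul hq2)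
    refine this.congr_deriv ?_
    ring
  have hden2 : HasDerivAt (fun x : ℝ => (1 - x^2*(1-x)^2)^2)
      (2*(1 - x^2*(1-x)^2)*(-(2*x*(1-x)^2 - x^2*(2*(1-x))))) x := by
    have := (hasDerivAt_pow 2 (1 - x^2*(1-x)^2)).comp x hden
    refine this.congr_deriv ?_
    ring
  have hN2 : HasDerivAt (fun x : ℝ => -16/3 + 28/3*x + 4*x^2 - 8/3*x^3)
      (28/3 + 8*x - 8*x^2) x := by
    have h3 : HasDerivAt (fun x : ℝ => x^3) (3*x^2) x := by simpa using hasDerivAt_pow 3 x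
    have := (((hasDerivAt_const x (-16/3:ℝ)).add ((hasDerivAt_id x).const_mul (28/3))).add
      (hx2.const_mul 4)).sub (h3.const_mul (8/3))
    refine this.congr_deriv ?_
    ring
  have hN1 : HasDerivAt (fun x : ℝ => 16/3 - 11*x + x^2 - 2/3*x^3)
      (-11 + 2*x - 2*x^2) x := by
    have h3 : HasDerivAt (fun x : ℝ => x^3) (3*x^2) x := by simpa using hasDerivAt_pow 3 x
    have := (((hasDerivAt_const x (16/3:ℝ)).sub ((hasDerivAt_id x).const_mul 11)).add
      hx2).sub (h3.const_mul (2/3))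
    refine this.congr_deriv ?_
    ring
  have hT2 := hN2.div hden2 (pow_ne_zero 2 hdne)
  have hT1 := hN1.div hden hdne
  have harc := arc_deriv x
  have hp : x^2 - x + 1 > 0 := by nlinarith [sq_nonneg (x - 1/2)]
  have hsum := (hT2.add hT1).add harc
  have hFF : myF = fun x => ((-16/3 + 28/3*x + 4*x^2 - 8/3*x^3)/(1 - x^2*(1-x)^2)^2
      + (16/3 - 11*x + x^2 - 2/3*x^3)/(1 - x^2*(1-x)^2))
      + (4*Real.sqrt 3/9)*Real.arctan ((2*x-1)/Real.sqrt 3) := by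
    funext y; unfold myF; ring
  rw [hFF]
  refine hsum.congr_deriv ?_
  unfold myG
  have hfac : 1 - x^2*(1-x)^2 = (x^2-x+1)*(1+x-x^2) := by ring
  have hpne : x^2 - x + 1 ≠ 0 := ne_of_gt hp
  have hq : 1 + x - x^2 ≠ 0 := by intro h; apply hdne; rw [hfac, h, mul_zero]
  rw [hfac]
  field_simp
  ring

lemma G_contOn : ContinuousOn myG (Set.Icc (0:ℝ) 1) := by
  have hd : ∀ x ∈ Set.Icc (0:ℝ) 1, (1 - x^2*(1-x)^2) ≠ 0 := fun x hx => by
    have := d_pos hx.1 hx.2; linarith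
  have hc : ContinuousOn (fun x : ℝ => 1 - x^2*(1-x)^2) (Set.Icc 0 1) :=
    (by continuity : Continuous (fun x : ℝ => 1 - x^2*(1-x)^2)).continuousOn
  unfold myG
  apply ContinuousOn.add
  apply ContinuousOn.sub
  · exact continuousOn_const.div (hc.pow 3) (fun x hx => pow_ne_zero _ (hd x hx))
  · exact continuousOn_const.div (hc.pow 2) (fun x hx => pow_ne_zero _ (hd x hx))
  · exact continuousOn_const.div hc hd

lemma integral_myG : ∫ x in (0:ℝ)..1, myG x = 4*Real.sqrt 3*Real.pi/27 := by
  have hderiv : ∀ x ∈ Set.uIcc (0:ℝ) 1, HasDerivAt myF (myG x) x := by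
    intro x hx
    rw [Set.uIcc_of_le (by norm_num : (0:ℝ) ≤ 1)] at hx
    exact F_deriv hx.1 hx.2
  have hint : IntervalIntegrable myG volume 0 1 := by
    apply ContinuousOn.intervalIntegrable
    rw [Set.uIcc_of_le (by norm_num : (0:ℝ) ≤ 1)]
    exact G_contOn
  rw [intervalIntegral.integral_eq_sub_of_hasDerivAt hderiv hint]
  have harct : Real.arctan (1/Real.sqrt 3) = Real.pi/6 := by
    rw [← Real.tan_pi_div_six]
    exact Real.arctan_tan (by linarith [Real.pi_pos]) (by linarith [Real.pi_pos])
  unfold myF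
  norm_num
  have h1 : Real.arctan (Real.sqrt 3)⁻¹ = Real.pi/6 := by rw [← one_div]; exact harct
  have h0 : Real.arctan (-1/Real.sqrt 3) = -(Real.pi/6) := by
    rw [neg_div, Real.arctan_neg, harct]
  rw [h0]
  ring

theorem stmt_13 :
    ∑' k : ℕ, (10 * (k : ℝ) - 1) / (Nat.choose (4 * k) (2 * k) : ℝ) =
      4 * Real.sqrt 3 * Real.pi / 27 := by
  have hr_mem : ∀ {x : ℝ}, x ∈ Set.Ioc (0:ℝ) 1 → x^2*(1-x)^2 ≤ 1/16 := by
    intro x hx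
    have := d_pos hx.1.le hx.2
    linarith
  set f : ℕ → ℝ → ℝ := fun k x => (40 * (k:ℝ)^2 + 6 * k - 1) * (x^2 * (1-x)^2) ^ k with hf
  have hcont : ∀ k, Continuous (f k) := by
    intro k
    apply Continuous.mul continuous_const
    exact Continuous.pow (by continuity) k
  have hterm : ∀ k : ℕ, (10 * (k : ℝ) - 1) / (Nat.choose (4 * k) (2 * k) : ℝ)
      = ∫ x in Set.Ioc (0:ℝ) 1, f k x := by
    intro k
    rw [term_eq k, intervalIntegral.integral_of_le (by norm_num : (0:ℝ) ≤ 1)]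
  rw [tsum_congr hterm]
  have hF_int : ∀ k, Integrable (f k) (volume.restrict (Set.Ioc (0:ℝ) 1)) := fun k =>
    (hcont k).integrableOn_Ioc
  have hbound : ∀ k : ℕ, ∀ x ∈ Set.Ioc (0:ℝ) 1,
      ‖f k x‖ ≤ (40 * (k:ℝ)^2 + 6 * k + 1) * (1/16)^k := by
    intro k x hx
    have h0 : (0:ℝ) ≤ x^2*(1-x)^2 := by positivity
    have h16 := hr_mem hx
    have hpow : (x^2*(1-x)^2)^k ≤ (1/16:ℝ)^k := pow_le_pow_left₀ h0 h16 k
    have hknn : (0:ℝ) ≤ (k:ℝ) := Nat.cast_nonneg k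
    have hcabs : |40 * (k:ℝ)^2 + 6 * k - 1| ≤ 40 * (k:ℝ)^2 + 6 * k + 1 := by
      rw [abs_le]
      constructor <;> nlinarith
    rw [hf]
    simp only [norm_mul, Real.norm_eq_abs]
    rw [abs_of_nonneg (pow_nonneg h0 k)]
    apply mul_le_mul hcabs hpow (pow_nonneg h0 k)
    positivity
  have hF_sum : Summable fun k => ∫ x in Set.Ioc (0:ℝ) 1, ‖f k x‖ := by
    have hmaj : Summable (fun k : ℕ => (40 * (k:ℝ)^2 + 6 * k + 1) * (1/16)^k) := by
      have h16 : ‖(1/16 : ℝ)‖ < 1 := by rw [Real.norm_eq_abs, abs_of_nonneg (by norm_num : (0:ℝ) ≤ 1/16)]; norm_num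
      have s2 := summable_pow_mul_geometric_of_norm_lt_one (R := ℝ) 2 h16
      have s1 := summable_pow_mul_geometric_of_norm_lt_one (R := ℝ) 1 h16
      have s0 := summable_geometric_of_norm_lt_one h16
      apply Summable.congr (((s2.mul_left 40).add (s1.mul_left 6)).add s0)
      intro n
      ring
    apply Summable.of_nonneg_of_le
      (fun k => integral_nonneg (fun x => norm_nonneg _)) _ hmaj
    intro k
    have hnorm : ∫ x in Set.Ioc (0:ℝ) 1, ‖f k x‖
        = ‖∫ x in Set.Ioc (0:ℝ) 1, ‖f k x‖‖ :=
      (Real.norm_of_nonneg (integral_nonneg (fun x => norm_nonneg _))).symm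
    rw [hnorm]
    have := norm_setIntegral_le_of_norm_le_const (μ := volume)
      (s := Set.Ioc (0:ℝ) 1) (f := fun x => ‖f k x‖)
      (C := (40 * (k:ℝ)^2 + 6 * k + 1) * (1/16)^k)
      (by rw [Real.volume_Ioc]; exact ENNReal.ofReal_lt_top)
      (fun x hx => by rw [Real.norm_of_nonneg (norm_nonneg _)]; exact hbound k x hx)
    have hvol : (volume (Set.Ioc (0:ℝ) 1)).toReal = 1 := by
      rw [Real.volume_Ioc]
      norm_num
    rw [Measure.real, hvol, mul_one] at this
    exact this
  rw [MeasureTheory.integral_tsum_of_summable_integral_norm hF_int hF_sum]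
  have hpt : ∀ x ∈ Set.Ioc (0:ℝ) 1, (∑' k, f k x) = myG x := by
    intro x hx
    have h0 : (0:ℝ) ≤ x^2*(1-x)^2 := by positivity
    have hr : ‖x^2*(1-x)^2‖ < 1 := by
      rw [Real.norm_eq_abs, abs_of_nonneg h0]
      have := hr_mem hx
      linarith
    exact (series_pt hr).tsum_eq
  rw [MeasureTheory.setIntegral_congr_fun measurableSet_Ioc hpt]
  rw [← intervalIntegral.integral_of_le (by norm_num : (0:ℝ) ≤ 1)]
  exact integral_myG
end

section
/- ∑_{k=0}^∞ k·4^k/C(4k,2k) = (3π + 8)/12. -/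
open MeasureTheory intervalIntegral

lemma beta_nat (a b : ℕ) :
    ∫ x in (0:ℝ)..1, x ^ a * (1 - x) ^ b
      = (a.factorial * b.factorial : ℝ) / (a + b + 1).factorial := by
  induction b generalizing a with
  | zero =>
      simp only [pow_zero, mul_one, integral_pow, one_pow, Nat.factorial_one,
        Nat.add_zero, Nat.factorial_succ]
      push_cast
      rw [eq_div_iff (by positivity)]
      field_simp
      simp
  | succ b ih =>
      have key : ∫ x in (0:ℝ)..1,
          ((a+1 : ℝ) * x ^ a * (1 - x) ^ (b+1) - (b+1 : ℝ) * x ^ (a+1) * (1 - x) ^ b)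
          = 0 := by
        have hderiv : ∀ x ∈ Set.uIcc (0:ℝ) 1,
            HasDerivAt (fun x : ℝ => x ^ (a+1) * (1 - x) ^ (b+1))
              ((a+1 : ℝ) * x ^ a * (1 - x) ^ (b+1) - (b+1 : ℝ) * x ^ (a+1) * (1 - x) ^ b) x := by
          intro x _
          have h1 : HasDerivAt (fun x : ℝ => x ^ (a+1)) ((a+1 : ℝ) * x ^ a) x := by
            simpa using hasDerivAt_pow (a+1) x
          have h2 : HasDerivAt (fun x : ℝ => (1 - x) ^ (b+1))
              (-((b+1 : ℝ) * (1 - x) ^ b)) x := by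
            have := (hasDerivAt_pow (b+1) (1 - x)).comp x
              ((hasDerivAt_id x).const_sub 1)
            simpa [Function.comp_def] using this
          have := h1.mul h2
          refine this.congr_deriv ?_
          ring
        have hint : IntervalIntegrable (fun x : ℝ =>
            (a+1 : ℝ) * x ^ a * (1 - x) ^ (b+1) - (b+1 : ℝ) * x ^ (a+1) * (1 - x) ^ b)
            volume 0 1 := by
          apply ContinuousOn.intervalIntegrable
          fun_prop
        have := integral_eq_sub_of_hasDerivAt hderiv hint
        simpa using this
      have hsplit : ∫ x in (0:ℝ)..1,
          ((a+1 : ℝ) * x ^ a * (1 - x) ^ (b+1) - (b+1 : ℝ) * x ^ (a+1) * (1 - x) ^ b)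
          = (a+1 : ℝ) * (∫ x in (0:ℝ)..1, x ^ a * (1 - x) ^ (b+1))
            - (b+1 : ℝ) * (∫ x in (0:ℝ)..1, x ^ (a+1) * (1 - x) ^ b) := by
        rw [intervalIntegral.integral_sub (by apply ContinuousOn.intervalIntegrable; fun_prop)
          (by apply ContinuousOn.intervalIntegrable; fun_prop)]
        simp_rw [mul_assoc]
        rw [intervalIntegral.integral_const_mul, intervalIntegral.integral_const_mul]
      rw [hsplit] at key
      have h2 := ih (a+1)
      have : (a+1 : ℝ) * (∫ x in (0:ℝ)..1, x ^ a * (1 - x) ^ (b+1))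
          = (b+1 : ℝ) * ((a+1).factorial * b.factorial / (a + 1 + b + 1).factorial) := by
        rw [← h2]; linarith
      have ha1 : (a+1 : ℝ) ≠ 0 := by positivity
      rw [eq_div_iff (by positivity : ((a + (b+1) + 1).factorial : ℝ) ≠ 0)]
      have hfa : ((a+1).factorial : ℝ) = (a+1) * a.factorial := by
        rw [Nat.factorial_succ]; push_cast; ring
      have hfb : ((b+1).factorial : ℝ) = (b+1) * b.factorial := by
        rw [Nat.factorial_succ]; push_cast; ring
      have heq : (a + 1 + b + 1) = (a + (b+1) + 1) := by omega
      rw [heq] at this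
      have hne : ((a + (b+1) + 1).factorial : ℝ) ≠ 0 := by positivity
      field_simp at this ⊢
      rw [hfb]
      nlinarith [this]

lemma inner_hasSum {z : ℝ} (hz : |z| < 1) :
    HasSum (fun k : ℕ => (k : ℝ) * (4 * k + 1) * z ^ k) (z * (5 + 3 * z) / (1 - z) ^ 3) := by
  have hz' : ‖z‖ < 1 := by rwa [Real.norm_eq_abs]
  have h0 : HasSum (fun n : ℕ => ((n + 0).choose 0 : ℝ) * z ^ n) (1 / (1 - z) ^ (0 + 1)) :=
    hasSum_choose_mul_geometric_of_norm_lt_one 0 hz'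
  have h1 : HasSum (fun n : ℕ => ((n + 1).choose 1 : ℝ) * z ^ n) (1 / (1 - z) ^ (1 + 1)) :=
    hasSum_choose_mul_geometric_of_norm_lt_one 1 hz'
  have h2 : HasSum (fun n : ℕ => ((n + 2).choose 2 : ℝ) * z ^ n) (1 / (1 - z) ^ (2 + 1)) :=
    hasSum_choose_mul_geometric_of_norm_lt_one 2 hz'
  have H := ((h2.mul_left 8).sub (h1.mul_left 11)).add (h0.mul_left 3)
  have hne : (1 : ℝ) - z ≠ 0 := by
    intro h
    rw [sub_eq_zero] at h
    rw [← h] at hz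
    simp at hz
  convert H using 1
  · rfl
  · funext n
    have c2 : ((n + 2).choose 2 : ℝ) = (n + 2) * (n + 1) / 2 := by
      rw [Nat.choose_two_right]
      push_cast [Nat.succ_sub_one]
      rw [Nat.cast_div (by rw [Nat.mul_comm]; exact (Nat.even_mul_succ_self (n+1)).two_dvd) (by norm_num)]
      push_cast
      ring
    have c1 : ((n + 1).choose 1 : ℝ) = n + 1 := by simp
    have c0 : ((n + 0).choose 0 : ℝ) = 1 := by simp
    rw [c2, c1, c0]
    ring
  · field_simp
    ring

lemma term_eq_integral (k : ℕ) :
    (k : ℝ) * 4 ^ k / ((4 * k).choose (2 * k) : ℝ)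
      = ∫ t in (0:ℝ)..1, (k : ℝ) * (4 * k + 1) * (4 * t ^ 2 * (1 - t) ^ 2) ^ k := by
  have hbeta : ∫ t in (0:ℝ)..1, t ^ (2*k) * (1 - t) ^ (2*k)
      = ((2*k).factorial * (2*k).factorial : ℝ) / (2*k + 2*k + 1).factorial := by
    exact beta_nat (2*k) (2*k)
  have hrw : ∀ t : ℝ, (k : ℝ) * (4 * k + 1) * (4 * t ^ 2 * (1 - t) ^ 2) ^ k
      = ((k : ℝ) * (4 * k + 1) * 4 ^ k) * (t ^ (2*k) * (1 - t) ^ (2*k)) := by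
    intro t
    rw [show (4 : ℝ) * t ^ 2 * (1 - t) ^ 2 = 4 * (t * (1-t))^2 by ring, mul_pow, ← pow_mul,
      mul_pow, mul_comm 2 k]
    ring
  simp_rw [hrw]
  rw [intervalIntegral.integral_const_mul, hbeta]
  have hch := Nat.choose_mul_factorial_mul_factorial (show 2*k ≤ 4*k by omega)
  have h4 : 4 * k - 2 * k = 2 * k := by omega
  rw [h4] at hch
  have hch' : (((4*k).choose (2*k) : ℝ)) * (2*k).factorial * (2*k).factorial
      = (4*k).factorial := by exact_mod_cast congrArg Nat.cast hch
  have h5 : (2*k + 2*k + 1).factorial = (4*k + 1) * (4*k).factorial := by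
    rw [show 2*k + 2*k + 1 = (4*k) + 1 by omega, Nat.factorial_succ]
  rw [h5]
  have hne1 : ((4*k).choose (2*k) : ℝ) ≠ 0 := by
    have := Nat.choose_pos (show 2*k ≤ 4*k by omega)
    positivity
  have hne2 : ((4*k).factorial : ℝ) ≠ 0 := by positivity
  have hne3 : ((2*k).factorial : ℝ) ≠ 0 := by positivity
  have hF : ((2*k).factorial : ℝ) * (2*k).factorial
      = ((4*k).factorial : ℝ) / ((4*k).choose (2*k)) := by
    rw [eq_div_iff hne1]; linear_combination hch'
  push_cast
  push_cast at hF
  rw [hF]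
  have hne4 : (4*(k:ℝ)+1) ≠ 0 := by positivity
  field_simp
lemma zbound {t : ℝ} (ht : t ∈ Set.Ioc (0:ℝ) 1) :
    0 ≤ 4 * t^2 * (1-t)^2 ∧ 4 * t^2 * (1-t)^2 ≤ 1/4 := by
  obtain ⟨h0, h1⟩ := ht
  have hA : t * (1-t) ≤ 1/4 := by nlinarith [sq_nonneg (2*t-1)]
  have hB : 0 ≤ t * (1-t) := mul_nonneg h0.le (by linarith)
  have hC : (t * (1-t)) * (t * (1-t)) ≤ (1/4) * (1/4) := by
    exact mul_le_mul hA hA hB (by norm_num)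
  constructor
  · positivity
  · nlinarith [hC]

lemma summable_bound : Summable (fun k : ℕ => (k : ℝ) * (4*k+1) * (1/4 : ℝ)^k) := by
  have h : ‖(1/4 : ℝ)‖ < 1 := by
    rw [Real.norm_eq_abs, abs_of_nonneg (by norm_num : (0:ℝ) ≤ 1/4)]
    norm_num
  have h2 := summable_pow_mul_geometric_of_norm_lt_one (R := ℝ) 2 h
  have h1 := summable_pow_mul_geometric_of_norm_lt_one (R := ℝ) 1 h
  have hc := (h2.mul_left 4).add h1
  apply hc.congr
  intro k
  ring

lemma swap_lemma :
    ∑' k : ℕ, (k : ℝ) * 4 ^ k / ((4 * k).choose (2 * k) : ℝ)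
      = ∫ t in (0:ℝ)..1,
          (4 * t^2 * (1-t)^2) * (5 + 3 * (4 * t^2 * (1-t)^2)) / (1 - 4 * t^2 * (1-t)^2)^3 := by
  set μ : Measure ℝ := volume.restrict (Set.Ioc (0:ℝ) 1) with hμ
  set f : ℕ → ℝ → ℝ := fun k t => (k : ℝ) * (4 * k + 1) * (4 * t ^ 2 * (1 - t) ^ 2) ^ k with hf
  have hcont : ∀ k, Continuous (f k) := by intro k; fun_prop
  have hint : ∀ k, Integrable (f k) μ := fun k => (hcont k).integrableOn_Ioc
  have hbound : ∀ k, (∫ t, ‖f k t‖ ∂μ) ≤ (k : ℝ) * (4*k+1) * (1/4 : ℝ)^k := by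
    intro k
    have hle : ∀ t ∈ Set.Ioc (0:ℝ) 1, ‖f k t‖ ≤ (k : ℝ) * (4*k+1) * (1/4 : ℝ)^k := by
      intro t ht
      obtain ⟨hz0, hz1⟩ := zbound ht
      rw [Real.norm_eq_abs, abs_of_nonneg (by positivity)]
      have hp : (4 * t^2 * (1-t)^2) ^ k ≤ (1/4 : ℝ)^k := pow_le_pow_left₀ hz0 hz1 k
      have hk0 : (0:ℝ) ≤ (k : ℝ) * (4*(k:ℝ)+1) := by positivity
      exact mul_le_mul_of_nonneg_left hp hk0
    have step1 : (∫ t, ‖f k t‖ ∂μ) ≤ ∫ t, ((k : ℝ) * (4*k+1) * (1/4 : ℝ)^k) ∂μ :=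
      setIntegral_mono_on ((hint k).norm) (integrable_const _) measurableSet_Ioc hle
    have step2 : (∫ t, ((k : ℝ) * (4*k+1) * (1/4 : ℝ)^k) ∂μ)
        = (k : ℝ) * (4*k+1) * (1/4 : ℝ)^k := by
      rw [MeasureTheory.integral_const, hμ, measureReal_restrict_apply_univ, Real.volume_real_Ioc]
      norm_num
    linarith [step1, step2.le, step2.ge]
  have hsum : Summable (fun k => ∫ t, ‖f k t‖ ∂μ) :=
    Summable.of_nonneg_of_le (fun k => integral_nonneg (fun t => norm_nonneg _)) hbound
      summable_bound
  have hswap := integral_tsum_of_summable_integral_norm hint hsum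
  calc ∑' k : ℕ, (k : ℝ) * 4 ^ k / ((4 * k).choose (2 * k) : ℝ)
      = ∑' k : ℕ, ∫ t, f k t ∂μ := by
        apply tsum_congr
        intro k
        rw [term_eq_integral k, intervalIntegral.integral_of_le zero_le_one]
    _ = ∫ t, (∑' k, f k t) ∂μ := hswap
    _ = ∫ t in (0:ℝ)..1,
          (4 * t^2 * (1-t)^2) * (5 + 3 * (4 * t^2 * (1-t)^2)) / (1 - 4 * t^2 * (1-t)^2)^3 := by
        rw [intervalIntegral.integral_of_le zero_le_one]
        apply setIntegral_congr_fun measurableSet_Ioc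
        intro t ht
        obtain ⟨hz0, hz1⟩ := zbound ht
        have habs : |4 * t^2 * (1-t)^2| < 1 := by
          rw [abs_of_nonneg hz0]; linarith
        exact (inner_hasSum habs).tsum_eq
lemma ftc_lemma :
    (∫ t in (0:ℝ)..1,
        (4 * t^2 * (1-t)^2) * (5 + 3 * (4 * t^2 * (1-t)^2)) / (1 - 4 * t^2 * (1-t)^2)^3)
      = (3 * Real.pi + 8) / 12 := by
  set G : ℝ → ℝ := fun t =>
    (4 * t^2 * (1-t)^2) * (5 + 3 * (4 * t^2 * (1-t)^2)) / (1 - 4 * t^2 * (1-t)^2)^3 with hG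
  set F : ℝ → ℝ := fun t =>
    (1/2) * Real.arctan (2*t-1) + (2*t-1)/(8*(2*t^2-2*t+1)) + (2*t-1)/(4*(2*t^2-2*t+1)^2)
      - (2*t-1)/(8*(1+2*t-2*t^2)) + (2*t-1)/(12*(1+2*t-2*t^2)^2) with hF
  have hzle : ∀ x ∈ Set.Icc (0:ℝ) 1, 4 * x^2 * (1-x)^2 ≤ 1/4 := by
    intro x hx
    obtain ⟨h0, h1⟩ := hx
    have hA : x * (1-x) ≤ 1/4 := by nlinarith [sq_nonneg (2*x-1)]
    have hB : 0 ≤ x * (1-x) := mul_nonneg h0 (by linarith)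
    nlinarith [mul_le_mul hA hA hB (by norm_num : (0:ℝ) ≤ 1/4)]
  have hPpos : ∀ x : ℝ, 0 < 2*x^2-2*x+1 := by
    intro x; nlinarith [sq_nonneg (2*x-1)]
  have hQpos : ∀ x ∈ Set.Icc (0:ℝ) 1, 0 < 1+2*x-2*x^2 := by
    intro x hx
    obtain ⟨h0, h1⟩ := hx
    nlinarith [mul_nonneg h0 (by linarith : (0:ℝ) ≤ 1 - x)]
  have huIcc : Set.uIcc (0:ℝ) 1 = Set.Icc 0 1 := Set.uIcc_of_le zero_le_one
  have hderiv : ∀ x ∈ Set.uIcc (0:ℝ) 1, HasDerivAt F (G x) x := by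
    intro x hx
    rw [huIcc] at hx
    have hzx := hzle x hx
    have hz0 : (0:ℝ) ≤ 4 * x^2 * (1-x)^2 := by positivity
    have h1z : (0:ℝ) < 1 - 4 * x^2 * (1-x)^2 := by linarith
    have hP := hPpos x
    have hQ := hQpos x hx
    have hPne : (2*x^2-2*x+1 : ℝ) ≠ 0 := ne_of_gt hP
    have hQne : (1+2*x-2*x^2 : ℝ) ≠ 0 := ne_of_gt hQ
    have h1zne : (1 - 4 * x^2 * (1-x)^2 : ℝ) ≠ 0 := ne_of_gt h1z
    -- building blocks
    have hu : HasDerivAt (fun t : ℝ => 2*t-1) 2 x := by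
      simpa using ((hasDerivAt_id x).const_mul 2).sub_const 1
    have ht2 : HasDerivAt (fun t : ℝ => t^2) (2*x) x := by
      simpa using hasDerivAt_pow 2 x
    have hPd : HasDerivAt (fun t : ℝ => 2*t^2-2*t+1) (4*x-2) x := by
      have := ((ht2.const_mul 2).sub ((hasDerivAt_id x).const_mul 2)).add_const 1
      refine this.congr_deriv ?_
      simp; ring
    have hQd : HasDerivAt (fun t : ℝ => 1+2*t-2*t^2) (2-4*x) x := by
      have := (((hasDerivAt_id x).const_mul 2).const_add 1).sub (ht2.const_mul 2)
      refine this.congr_deriv ?_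
      simp; ring
    have harctan : HasDerivAt (fun t : ℝ => Real.arctan (2*t-1))
        ((1/(1+(2*x-1)^2)) * 2) x := hu.arctan
    have h2' : HasDerivAt (fun t : ℝ => (2*t-1)/(8*(2*t^2-2*t+1)))
        ((2 * (8*(2*x^2-2*x+1)) - (2*x-1) * (8*(4*x-2))) / (8*(2*x^2-2*x+1))^2) x :=
      hu.div (hPd.const_mul 8) (by positivity)
    have h3' : HasDerivAt (fun t : ℝ => (2*t-1)/(4*(2*t^2-2*t+1)^2))
        ((2 * (4*(2*x^2-2*x+1)^2) - (2*x-1) * (4*(2*(2*x^2-2*x+1)^1*(4*x-2))))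
          / (4*(2*x^2-2*x+1)^2)^2) x := by
      have hp2 : HasDerivAt (fun t : ℝ => (2*t^2-2*t+1)^2)
          (2*(2*x^2-2*x+1)^1*(4*x-2)) x := by
        have := hPd.pow 2
        simpa [Pi.pow_def] using this
      exact hu.div (hp2.const_mul 4) (by positivity)
    have h4' : HasDerivAt (fun t : ℝ => (2*t-1)/(8*(1+2*t-2*t^2)))
        ((2 * (8*(1+2*x-2*x^2)) - (2*x-1) * (8*(2-4*x))) / (8*(1+2*x-2*x^2))^2) x :=
      hu.div (hQd.const_mul 8) (by positivity)
    have h5' : HasDerivAt (fun t : ℝ => (2*t-1)/(12*(1+2*t-2*t^2)^2))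
        ((2 * (12*(1+2*x-2*x^2)^2) - (2*x-1) * (12*(2*(1+2*x-2*x^2)^1*(2-4*x))))
          / (12*(1+2*x-2*x^2)^2)^2) x := by
      have hq2 : HasDerivAt (fun t : ℝ => (1+2*t-2*t^2)^2)
          (2*(1+2*x-2*x^2)^1*(2-4*x)) x := by
        have := hQd.pow 2
        simpa [Pi.pow_def] using this
      exact hu.div (hq2.const_mul 12) (by positivity)
    have H := ((((harctan.const_mul (1/2)).add h2').add h3').sub h4').add h5'
    refine H.congr_deriv ?_
    have h2P : 1+(2*x-1)^2 = 2*(2*x^2-2*x+1) := by ring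
    simp only [hG]
    rw [h2P]
    have hPQ : (1 - 4 * x^2 * (1-x)^2) = (2*x^2-2*x+1) * (1+2*x-2*x^2) := by ring
    rw [hPQ]
    have hPne' : (2 * x * (x - 1) + 1 : ℝ) ≠ 0 := by convert hPne using 1; ring
    field_simp
    ring
  have hGint : IntervalIntegrable G volume 0 1 := by
    apply ContinuousOn.intervalIntegrable
    apply ContinuousOn.div
    · fun_prop
    · fun_prop
    · intro x hx
      rw [huIcc] at hx
      have := hzle x hx
      have h0 : (0:ℝ) < 1 - 4 * x^2 * (1-x)^2 := by
        have : (0:ℝ) ≤ 4 * x^2 * (1-x)^2 := by positivity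
        linarith
      positivity
  have key := intervalIntegral.integral_eq_sub_of_hasDerivAt hderiv hGint
  rw [key, hF]
  simp only []
  norm_num
  ring

theorem stmt_14 :
    ∑' k : ℕ, (k : ℝ) * 4 ^ k / (Nat.choose (4 * k) (2 * k) : ℝ) = (3 * Real.pi + 8) / 12 :=
  swap_lemma.trans ftc_lemma
end

section
/- For every real u with u < 1 and u ≠ 0, ∑_{k=0}^∞ (u^k/(2k+1)) · ( (1 − i√(1−u))^{−2k−1} + (1 + i√(1−u))^{−2k−1} ) = arctanh(√u)/√u, where for u < 0 both sides are interpreted via the principal complex square root and the identity is an equality of complex numbers. -/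
open Complex

lemma myHasSum_artanh {z : ℂ} (hz : ‖z‖ < 1) :
    HasSum (fun k : ℕ => z ^ (2 * k + 1) / (2 * (k : ℂ) + 1))
      ((Complex.log (1 + z) - Complex.log (1 - z)) / 2) := by
  have h1 := Complex.hasSum_taylorSeries_neg_log hz
  have h2 := Complex.hasSum_taylorSeries_neg_log (z := -z) (by simpa using hz)
  have h3 := (h1.sub h2).div_const 2
  have hinj : Function.Injective (fun k : ℕ => 2 * k + 1) := by
    intro a b h; simpa using h
  have hzero : ∀ n : ℕ, n ∉ Set.range (fun k : ℕ => 2 * k + 1) →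
      (z ^ n / n - (-z) ^ n / n) / 2 = 0 := by
    intro n hn
    have hev : Even n := by
      rcases Nat.even_or_odd n with h | h
      · exact h
      · obtain ⟨m, hm⟩ := h
        exact absurd ⟨m, show 2*m+1 = n by omega⟩ hn
    rw [hev.neg_pow]; ring
  have h4 := (Function.Injective.hasSum_iff hinj hzero).mpr h3
  have heq : (fun k : ℕ => z ^ (2 * k + 1) / (2 * (k : ℂ) + 1)) =
      (fun n : ℕ => (z ^ n / n - (-z) ^ n / n) / 2) ∘ (fun k : ℕ => 2 * k + 1) := by
    funext k
    have hodd : Odd (2 * k + 1) := ⟨k, by ring⟩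
    simp only [Function.comp_apply, hodd.neg_pow]
    push_cast
    ring
  rw [heq]
  convert h4 using 1
  ring

theorem stmt_17 (u : ℝ) (hu1 : u < 1) (hu2 : u ≠ 0) :
    ∑' k : ℕ,
        ((u : ℂ) ^ k / (2 * (k : ℂ) + 1)) *
          ((1 - Complex.I * ((1 - u : ℂ) ^ ((1 : ℂ) / 2))) ^ (-(2 * (k : ℤ) + 1)) +
            (1 + Complex.I * ((1 - u : ℂ) ^ ((1 : ℂ) / 2))) ^ (-(2 * (k : ℤ) + 1))) =
      ((Complex.log (1 + (u : ℂ) ^ ((1 : ℂ) / 2)) -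
          Complex.log (1 - (u : ℂ) ^ ((1 : ℂ) / 2))) / 2) / (u : ℂ) ^ ((1 : ℂ) / 2) := by
  have h2u : (0:ℝ) < 2 - u := by linarith
  set s : ℝ := Real.sqrt (1 - u) with hs
  have hs2 : s ^ 2 = 1 - u := Real.sq_sqrt (by linarith)
  have hsc : (1 - (u:ℂ)) ^ ((1:ℂ)/2) = (s:ℂ) := by
    rw [show (1 - (u:ℂ)) = ((1 - u : ℝ) : ℂ) by push_cast; ring,
      show ((1:ℂ)/2) = (((1/2 : ℝ)):ℂ) by norm_num,
      ← Complex.ofReal_cpow (by linarith)]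
    congr 1
    rw [hs, Real.sqrt_eq_rpow]
  set t : ℂ := (u:ℂ) ^ ((1:ℂ)/2) with htdef
  have hu0 : (u:ℂ) ≠ 0 := by exact_mod_cast hu2
  have ht2 : t * t = (u:ℂ) := by
    rw [htdef, ← Complex.cpow_add _ _ hu0]
    norm_num
  have ht0 : t ≠ 0 := by
    intro h
    apply hu0; rw [← ht2, h, mul_zero]
  have htn : ‖t‖ ^ 2 = |u| := by
    have : ‖t * t‖ = ‖(u:ℂ)‖ := by rw [ht2]
    rwa [norm_mul, ← sq, Complex.norm_real, Real.norm_eq_abs] at this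
  set wp : ℂ := 1 + Complex.I * (s:ℂ) with hwp
  set wm : ℂ := 1 - Complex.I * (s:ℂ) with hwm
  have hwpn : ‖wp‖ ^ 2 = 2 - u := by
    rw [Complex.sq_norm, Complex.normSq_apply]
    simp [hwp]
    nlinarith [hs2]
  have hwmn : ‖wm‖ ^ 2 = 2 - u := by
    rw [Complex.sq_norm, Complex.normSq_apply]
    simp [hwm]
    nlinarith [hs2]
  have hwp0 : wp ≠ 0 := by
    intro h; rw [h] at hwpn; simp at hwpn; linarith
  have hwm0 : wm ≠ 0 := by
    intro h; rw [h] at hwmn; simp at hwmn; linarith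
  set zp : ℂ := t / wp with hzp
  set zm : ℂ := t / wm with hzm
  have habs : |u| < 2 - u := by
    rcases abs_cases u with ⟨h, _⟩ | ⟨h, _⟩ <;> rw [h] <;> linarith
  have hzpn : ‖zp‖ < 1 := by
    have h1 : ‖zp‖ ^ 2 = |u| / (2 - u) := by
      rw [hzp, norm_div, div_pow, htn, hwpn]
    have h2 : ‖zp‖ ^ 2 < 1 := by rw [h1]; rw [div_lt_one h2u]; exact habs
    nlinarith [norm_nonneg zp]
  have hzmn : ‖zm‖ < 1 := by
    have h1 : ‖zm‖ ^ 2 = |u| / (2 - u) := by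
      rw [hzm, norm_div, div_pow, htn, hwmn]
    have h2 : ‖zm‖ ^ 2 < 1 := by rw [h1]; rw [div_lt_one h2u]; exact habs
    nlinarith [norm_nonneg zm]
  -- real parts positive
  have hre : ∀ z : ℂ, ‖z‖ < 1 → 0 < (1 + z).re ∧ 0 < (1 - z).re := by
    intro z hz
    have := Complex.abs_re_le_norm z
    have h1 := abs_le.mp (this.trans hz.le)
    constructor <;> simp <;> linarith [(abs_lt.mp (lt_of_le_of_lt this hz)).1,
      (abs_lt.mp (lt_of_le_of_lt this hz)).2]
  -- log addition under positive real part
  have logadd : ∀ x y : ℂ, 0 < x.re → 0 < y.re →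
      Complex.log x + Complex.log y = Complex.log (x * y) := by
    intro x y hx hy
    have hx0 : x ≠ 0 := fun h => by simp [h] at hx
    have hy0 : y ≠ 0 := fun h => by simp [h] at hy
    have hax := Complex.abs_arg_lt_pi_div_two_iff.mpr (Or.inl hx)
    have hay := Complex.abs_arg_lt_pi_div_two_iff.mpr (Or.inl hy)
    rw [abs_lt] at hax hay
    exact (Complex.log_mul hx0 hy0 ⟨by linarith, by linarith⟩).symm
  obtain ⟨hp1, hp2⟩ := hre zp hzpn
  obtain ⟨hm1, hm2⟩ := hre zm hzmn
  have hsC : (s:ℂ) * (s:ℂ) = 1 - (u:ℂ) := by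
    have h := congrArg (Complex.ofReal) hs2
    push_cast at h
    linear_combination h
  have h2uC : (2:ℂ) - (u:ℂ) ≠ 0 := by
    have : ((2 - u : ℝ) : ℂ) ≠ 0 := by exact_mod_cast h2u.ne'
    push_cast at this
    exact this
  have hc : (0:ℝ) < 2 / (2 - u) := by positivity
  have h1pt : (1:ℂ) + t ≠ 0 := by
    intro h
    have ht : t = -1 := by linear_combination h
    have : (u:ℂ) = 1 := by rw [← ht2, ht]; ring
    exact absurd (by exact_mod_cast this) hu1.ne
  have h1mt : (1:ℂ) - t ≠ 0 := by
    intro h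
    have ht : t = 1 := by linear_combination -h
    have : (u:ℂ) = 1 := by rw [← ht2, ht]; ring
    exact absurd (by exact_mod_cast this) hu1.ne
  have hww : wp * wm = 2 - (u:ℂ) := by
    rw [hwp, hwm]
    linear_combination (-((s:ℂ) * (s:ℂ))) * Complex.I_sq + hsC
  have hwsum : wp + wm = 2 := by rw [hwp, hwm]; ring
  have hnum : (wp + t) * (wm + t) = 2 * (1 + t) := by
    linear_combination hww + ht2 + t * hwsum
  have hnum' : (wp - t) * (wm - t) = 2 * (1 - t) := by
    linear_combination hww + ht2 - t * hwsum
  have hprodp : (1 + zp) * (1 + zm) = ((2 / (2 - u) : ℝ) : ℂ) * (1 + t) := by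
    rw [hzp, hzm]
    have hh : (1 + t / wp) * (1 + t / wm) = ((wp + t) * (wm + t)) / (wp * wm) := by
      field_simp
    rw [hh, hnum, hww]
    push_cast
    field_simp
  have hprodm : (1 - zp) * (1 - zm) = ((2 / (2 - u) : ℝ) : ℂ) * (1 - t) := by
    rw [hzp, hzm]
    have hh : (1 - t / wp) * (1 - t / wm) = ((wp - t) * (wm - t)) / (wp * wm) := by
      field_simp
    rw [hh, hnum', hww]
    push_cast
    field_simp
  have hlogp : Complex.log (1 + zp) + Complex.log (1 + zm) =
      (Real.log (2 / (2 - u)) : ℂ) + Complex.log (1 + t) := by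
    rw [logadd _ _ hp1 hm1, hprodp, Complex.log_ofReal_mul hc h1pt]
  have hlogm : Complex.log (1 - zp) + Complex.log (1 - zm) =
      (Real.log (2 / (2 - u)) : ℂ) + Complex.log (1 - t) := by
    rw [logadd _ _ hp2 hm2, hprodm, Complex.log_ofReal_mul hc h1mt]
  have ha : (Complex.log (1 + zp) - Complex.log (1 - zp)) / 2 +
      (Complex.log (1 + zm) - Complex.log (1 - zm)) / 2 =
      (Complex.log (1 + t) - Complex.log (1 - t)) / 2 := by
    linear_combination hlogp / 2 - hlogm / 2
  have hsum := ((myHasSum_artanh hzpn).add (myHasSum_artanh hzmn)).div_const t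
  rw [ha] at hsum
  rw [hsc, ← hwm, ← hwp, ← hsum.tsum_eq]
  congr 1
  funext k
  have hkz : (2 * (k:ℂ) + 1) ≠ 0 := by
    have h0 : ((2 * k + 1 : ℕ) : ℂ) ≠ 0 := Nat.cast_ne_zero.mpr (by omega)
    intro h
    apply h0
    push_cast
    linear_combination h
  have hez : (-(2 * (k:ℤ) + 1)) = -((2 * k + 1 : ℕ) : ℤ) := by push_cast; ring
  rw [hez, zpow_neg, zpow_neg, zpow_natCast, zpow_natCast]
  have hupow : (u:ℂ) ^ k = t ^ (2 * k) := by rw [pow_mul, sq, ht2]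
  rw [hzp, hzm, div_pow, div_pow, hupow]
  have hwpk : wp ^ (2 * k + 1) ≠ 0 := pow_ne_zero _ hwp0
  have hwmk : wm ^ (2 * k + 1) ≠ 0 := pow_ne_zero _ hwm0
  field_simp
  ring
end

section
/- For every real number x and every positive integer n, ∑_{k=1}^n (2(x−16)k² + (x+32)k − x − 6)·x^k/((2k−1)·C(4k,2k)) = −x + (n+1)·x^{n+1}/C(4n,2n). -/
lemma choose_eq_cb (k : ℕ) : Nat.choose (4 * k) (2 * k) = Nat.centralBinom (2 * k) := by
  unfold Nat.centralBinom; congr 1; ring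

lemma cb_key (j : ℕ) :
    (2 * j + 2) * (2 * j + 1) * Nat.centralBinom (2 * j + 2) =
      2 * (2 * (2 * j + 1) + 1) * (2 * (2 * (2 * j) + 1) * Nat.centralBinom (2 * j)) := by
  have h1 := Nat.succ_mul_centralBinom_succ (2 * j + 1)
  have h2 := Nat.succ_mul_centralBinom_succ (2 * j)
  calc (2 * j + 2) * (2 * j + 1) * Nat.centralBinom (2 * j + 2)
      = (2 * j + 1) * ((2 * j + 1 + 1) * Nat.centralBinom (2 * j + 1 + 1)) := by ring
    _ = (2 * j + 1) * (2 * (2 * (2 * j + 1) + 1) * Nat.centralBinom (2 * j + 1)) := by rw [h1]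
    _ = 2 * (2 * (2 * j + 1) + 1) * ((2 * j + 1) * Nat.centralBinom (2 * j + 1)) := by ring
    _ = 2 * (2 * (2 * j + 1) + 1) * ((2 * j + 1) * Nat.centralBinom (2 * j + 1)) := rfl
    _ = _ := by rw [show (2 * j + 1) * Nat.centralBinom (2 * j + 1) = (2*j+1) * Nat.centralBinom (2*j+1) from rfl]; rw [show 2*j+1 = 2*j+1 from rfl]; nlinarith [h2]

theorem stmt_19 (x : ℝ) (n : ℕ) (hn : 0 < n) :
    ∑ k ∈ Finset.Icc 1 n,
        (2 * (x - 16) * (k : ℝ) ^ 2 + (x + 32) * k - x - 6) * x ^ k /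
          ((2 * (k : ℝ) - 1) * (Nat.choose (4 * k) (2 * k) : ℝ)) =
      -x + ((n : ℝ) + 1) * x ^ (n + 1) / (Nat.choose (4 * n) (2 * n) : ℝ) := by
  induction n with
  | zero => omega
  | succ m ih =>
    rcases Nat.eq_zero_or_pos m with hm | hm
    · subst hm
      simp [Finset.Icc_self]
      norm_num [Nat.choose]
      ring
    · rw [Finset.sum_Icc_succ_top (by omega : 1 ≤ m + 1), ih hm]
      rw [choose_eq_cb, choose_eq_cb]
      have hkey := cb_key m
      have hkeyR : ((2 * m + 2 : ℕ) : ℝ) * (2 * m + 1) * Nat.centralBinom (2 * m + 2) =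
          2 * (2 * (2 * m + 1) + 1) * (2 * (2 * (2 * m) + 1) * Nat.centralBinom (2 * m)) := by
        exact_mod_cast congrArg (Nat.cast : ℕ → ℝ) hkey
      have hc1 : ((Nat.centralBinom (2 * m) : ℝ)) ≠ 0 := by
        exact_mod_cast (Nat.centralBinom_pos _).ne'
      have hc2 : ((Nat.centralBinom (2 * m + 2) : ℝ)) ≠ 0 := by
        exact_mod_cast (Nat.centralBinom_pos _).ne'
      have h2m1 : (2 * (m : ℝ) + 1) ≠ 0 := by positivity
      have h2m2 : (2 * (m : ℝ) + 2) ≠ 0 := by positivity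
      have hrw : 2 * (m + 1) = 2 * m + 2 := by ring
      rw [hrw]
      push_cast at hkeyR ⊢
      rw [show (2 * ((m:ℝ) + 1) - 1) = 2 * (m:ℝ) + 1 from by ring]
      field_simp [hc1, hc2, h2m1]
      linear_combination (x ^ (m + 1) / 2) * hkeyR
end
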